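/- There exists an absolute constant C such that the following holds for all positive integers N, d, M with M ≤ N and N·d even. Let U ⊆ {1,…,N} with |U| = M, and let E be a nonnegative integer with 2E ≤ M·d and N·d − 2M·d + 2E ≥ 0. Then the number of perfect matchings of the set {1,…,N}×{1,…,d} having exactly E matched pairs both of whose elements have first coordinate in U is at most (N·d+1)^C · exp(N·d·F(M/N, 2E/(M·d))) times the total number of perfect matchings of {1,…,N}×{1,…,d}. -/

import Mathlib

/-- `P` is a perfect matching of `α`: a set of non-diagonal unordered pairs such that
every element of `α` belongs to exactly one pair. -/
def IsPerfectMatching {α : Type*} (P : Set (Sym2 α)) : Prop :=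
  (∀ e ∈ P, ¬ e.IsDiag) ∧ ∀ x : α, ∃! e, e ∈ P ∧ x ∈ e

/-- The number of pairs of the matching `P` both of whose elements have first
coordinate in `U`. -/
noncomputable def pairsIn {α β : Type*} (P : Set (Sym2 (α × β))) (U : Set α) : ℕ :=
  {e ∈ P | ∀ x ∈ e, x.1 ∈ U}.ncard

/-- `h x = -x log x` (with `h 0 = 0`, since `Real.log 0 = 0`). -/
noncomputable def entH (x : ℝ) : ℝ := -x * Real.log x

/-- `H x = h x + h (1 - x)`. -/
noncomputable def entHH (x : ℝ) : ℝ := entH x + entH (1 - x)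

/-- The rate function `F(x,t)`. -/
noncomputable def entF (x t : ℝ) : ℝ :=
  (1 / 2) * entH (t * x) + entH ((1 - t) * x) + (1 / 2) * entH (1 - (2 - t) * x) - entHH x



open Function Set

lemma gen_upper {X Y : Type*} [Finite X] [Finite Y] (f : X → Y) (c1 c2 : ℕ)
    (h : ∀ y : Y, c2 * Nat.card {x : X // f x = y} ≤ c1) :
    c2 * Nat.card X ≤ Nat.card Y * c1 := by
  classical
  have : Fintype X := Fintype.ofFinite X
  have : Fintype Y := Fintype.ofFinite Y
  simp only [Nat.card_eq_fintype_card]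
  have key : (Finset.univ : Finset X).card
      = ∑ y : Y, (Finset.univ.filter fun x => f x = y).card :=
    Finset.card_eq_sum_card_fiberwise (fun x _ => Finset.mem_univ _)
  calc c2 * Fintype.card X = ∑ y : Y, c2 * (Finset.univ.filter fun x => f x = y).card := by
        rw [Fintype.card, key, Finset.mul_sum]
    _ ≤ ∑ _y : Y, c1 := Finset.sum_le_sum (fun y _ => by
        have := h y
        rwa [Nat.card_eq_fintype_card, Fintype.card_subtype] at this)
    _ = Fintype.card Y * c1 := by
        rw [Finset.sum_const, smul_eq_mul, Fintype.card]

lemma gen_lower {X Y : Type*} [Finite X] [Finite Y] (f : X → Y) (c : ℕ)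
    (h : ∀ y : Y, c ≤ Nat.card {x : X // f x = y}) :
    Nat.card Y * c ≤ Nat.card X := by
  classical
  have : Fintype X := Fintype.ofFinite X
  have : Fintype Y := Fintype.ofFinite Y
  simp only [Nat.card_eq_fintype_card]
  have key : (Finset.univ : Finset X).card
      = ∑ y : Y, (Finset.univ.filter fun x => f x = y).card :=
    Finset.card_eq_sum_card_fiberwise (fun x _ => Finset.mem_univ _)
  calc Fintype.card Y * c = ∑ _y : Y, c := by
        rw [Finset.sum_const, smul_eq_mul, Fintype.card]
    _ ≤ ∑ y : Y, (Finset.univ.filter fun x => f x = y).card :=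
        Finset.sum_le_sum (fun y _ => by
          have := h y
          rwa [Nat.card_eq_fintype_card, Fintype.card_subtype] at this)
    _ = Fintype.card X := by rw [Fintype.card, key]

/-- partial matching with all pairs inside `T` -/
def IsPM {α : Type*} (Q : Set (Sym2 α)) (T : Set α) : Prop :=
  (∀ e ∈ Q, ¬ e.IsDiag) ∧ (∀ e ∈ Q, ∀ x ∈ e, x ∈ T) ∧
  (∀ e ∈ Q, ∀ f ∈ Q, ∀ x, x ∈ e → x ∈ f → e = f)

def pairsOf {α : Type*} {m : ℕ} (g : Fin m × Fin 2 → α) : Set (Sym2 α) :=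
  Set.range (fun i : Fin m => s(g (i,0), g (i,1)))

lemma fin2_cases (j : Fin 2) : j = 0 ∨ j = 1 := by omega

lemma isPM_pairsOf {α : Type*} {m : ℕ} {T : Set α} (g : Fin m × Fin 2 → α)
    (hg : Injective g) (hT : ∀ p, g p ∈ T) :
    IsPM (pairsOf g) T ∧ (pairsOf g).ncard = m := by
  have hmem : ∀ (x : α) (i : Fin m), x ∈ s(g (i,0), g (i,1)) → ∃ j, x = g (i, j) := by
    intro x i hx
    rw [Sym2.mem_iff] at hx
    rcases hx with h | h
    · exact ⟨0, h⟩
    · exact ⟨1, h⟩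
  constructor
  · refine ⟨?_, ?_, ?_⟩
    · rintro e ⟨i, rfl⟩
      simp only [Sym2.isDiag_iff_proj_eq]
      intro h
      have := hg h
      simp at this
    · rintro e ⟨i, rfl⟩ x hx
      obtain ⟨j, rfl⟩ := hmem _ _ hx
      exact hT _
    · rintro e ⟨i, rfl⟩ f ⟨i', rfl⟩ x hx hx'
      obtain ⟨j, rfl⟩ := hmem _ _ hx
      obtain ⟨j', h⟩ := hmem _ _ hx'
      have : (i, j) = (i', j') := hg h
      have : i = i' := (Prod.mk.injEq _ _ _ _ ▸ this).1
      rw [this]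
  · have hinj : Injective (fun i : Fin m => s(g (i,0), g (i,1))) := by
      intro i i' h
      have h' : s(g (i,0), g (i,1)) = s(g (i',0), g (i',1)) := h
      have : g (i, 0) ∈ s(g (i',0), g (i',1)) := by rw [← h']; simp
      obtain ⟨j, hj⟩ := hmem _ _ this
      exact ((Prod.mk.injEq _ _ _ _ ▸ hg hj).1)
    rw [pairsOf, ← Nat.card_coe_set_eq, Nat.card_range_of_injective hinj]
    simp

lemma exists_enum {α : Type*} (Q : Set (Sym2 α)) (T : Set α) (m : ℕ)
    [Finite α] (hQ : IsPM Q T) (hm : Q.ncard = m) :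
    ∃ e : Fin m × Fin 2 ↪ α, pairsOf (e : Fin m × Fin 2 → α) = Q ∧
      Set.range e = {x | ∃ q ∈ Q, x ∈ q} ∧ ∀ p, (e : Fin m × Fin 2 → α) p ∈ T := by
  classical
  have hcard : Nat.card Q = m := by rw [Nat.card_coe_set_eq, hm]
  have ι : Fin m ≃ Q := (Finite.equivFinOfCardEq hcard).symm
  have hc : ∀ q : Sym2 α, s((Quot.out q).1, (Quot.out q).2) = q := fun q => by
    rw [Sym2.mk, Prod.mk.eta, q.out_eq]
  set c : Sym2 α → α × α := Quot.out with hcdef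
  have hc1 : ∀ q : Sym2 α, (c q).1 ∈ q := Sym2.out_fst_mem
  have hc2 : ∀ q : Sym2 α, (c q).2 ∈ q := Sym2.out_snd_mem
  have hne : ∀ q ∈ Q, (c q).1 ≠ (c q).2 := by
    intro q hq h
    apply hQ.1 q hq
    rw [← hc q, Sym2.isDiag_iff_proj_eq]
    exact h
  set e : Fin m × Fin 2 → α := fun p => if p.2 = 0 then (c (ι p.1)).1 else (c (ι p.1)).2 with he
  have hmem : ∀ p : Fin m × Fin 2, e p ∈ (ι p.1 : Sym2 α) := by
    intro p
    rw [he]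
    dsimp only
    split
    · exact hc1 _
    · exact hc2 _
  have hinj : Injective e := by
    rintro ⟨i, j⟩ ⟨i', j'⟩ hpp
    have h1 : e (i, j) ∈ (ι i : Sym2 α) := hmem (i, j)
    have h2 : e (i, j) ∈ (ι i' : Sym2 α) := hpp ▸ hmem (i', j')
    have hq : (ι i : Sym2 α) = (ι i' : Sym2 α) :=
      hQ.2.2 _ (ι i).2 _ (ι i').2 _ h1 h2
    have h1' : i = i' := ι.injective (Subtype.ext hq)
    subst h1'
    have h2' : j = j' := by
      by_contra hne'
      apply hne (ι i : Sym2 α) (ι i).2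
      rcases fin2_cases j with h | h <;> rcases fin2_cases j' with h' | h' <;>
        subst h <;> subst h'
      · exact absurd rfl hne'
      · rw [he] at hpp; simpa using hpp
      · rw [he] at hpp; simp at hpp; exact hpp.symm
      · exact absurd rfl hne'
    rw [h2']
  have hpair : ∀ i : Fin m, s(e (i, 0), e (i, 1)) = (ι i : Sym2 α) := by
    intro i
    have : s(e (i, 0), e (i, 1)) = s((c (ι i : Sym2 α)).1, (c (ι i : Sym2 α)).2) := by
      rw [he]; simp
    rw [this, hc]
  refine ⟨⟨e, hinj⟩, ?_, ?_, ?_⟩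
  · ext q
    constructor
    · rintro ⟨i, rfl⟩
      show s(e (i,0), e (i,1)) ∈ Q
      rw [hpair i]; exact (ι i).2
    · intro hq
      refine ⟨ι.symm ⟨q, hq⟩, ?_⟩
      show s(e (ι.symm ⟨q, hq⟩,0), e (ι.symm ⟨q, hq⟩,1)) = q
      rw [hpair, Equiv.apply_symm_apply]
  · ext x
    simp only [Set.mem_range, Set.mem_setOf_eq]
    constructor
    · rintro ⟨p, rfl⟩
      exact ⟨ι p.1, (ι p.1).2, hmem p⟩
    · rintro ⟨q, hq, hx⟩
      have : x ∈ (ι (ι.symm ⟨q, hq⟩) : Sym2 α) := by rw [Equiv.apply_symm_apply]; exact hx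
      rw [← hpair (ι.symm ⟨q, hq⟩), Sym2.mem_iff] at this
      rcases this with h | h
      · exact ⟨(ι.symm ⟨q, hq⟩, 0), h.symm⟩
      · exact ⟨(ι.symm ⟨q, hq⟩, 1), h.symm⟩
  · intro p
    exact hQ.2.1 _ (ι p.1).2 _ (hmem p)


lemma fin2_add_self (x : Fin 2) : x + x = 0 := by omega

lemma vset_ncard {α : Type*} [Finite α] {Q : Set (Sym2 α)} {T : Set α} {m : ℕ}
    (hQ : IsPM Q T) (hm : Q.ncard = m) : {x | ∃ q ∈ Q, x ∈ q}.ncard = 2 * m := by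
  obtain ⟨e, -, hrange, -⟩ := exists_enum Q T m hQ hm
  rw [← hrange, ← Nat.card_coe_set_eq, Nat.card_range_of_injective e.injective]
  simp [Nat.card_eq_fintype_card, two_mul, mul_comm]

lemma perfect_isPM {α : Type*} {P : Set (Sym2 α)} (hP : IsPerfectMatching P) :
    IsPM P Set.univ := by
  refine ⟨hP.1, fun e _ x _ => Set.mem_univ x, ?_⟩
  intro e he f hf x hxe hxf
  obtain ⟨q, -, hq⟩ := hP.2 x
  rw [hq e ⟨he, hxe⟩, hq f ⟨hf, hxf⟩]

lemma perfect_ncard {α : Type*} [Finite α] {P : Set (Sym2 α)} (hP : IsPerfectMatching P) :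
    2 * P.ncard = Nat.card α := by
  obtain ⟨e, -, hrange, -⟩ := exists_enum P Set.univ P.ncard (perfect_isPM hP) rfl
  have huniv : Set.range e = Set.univ := by
    rw [hrange]
    ext x
    simp only [Set.mem_setOf_eq, Set.mem_univ, iff_true]
    obtain ⟨q, ⟨hq, hx⟩, -⟩ := hP.2 x
    exact ⟨q, hq, hx⟩
  have h1 := Nat.card_range_of_injective e.injective
  rw [huniv, Nat.card_coe_set_eq, Set.ncard_univ] at h1
  simp only [Nat.card_eq_fintype_card, Fintype.card_prod, Fintype.card_fin] at h1 ⊢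
  omega

lemma pm_count {α : Type*} [Finite α] (T : Set α) (m : ℕ) :
    Nat.card {Q : Set (Sym2 α) // IsPM Q T ∧ Q.ncard = m} * (2 ^ m * Nat.factorial m)
      ≤ (Nat.card ↥T).descFactorial (2 * m) := by
  classical
  have : Fintype α := Fintype.ofFinite α
  set Y := {Q : Set (Sym2 α) // IsPM Q T ∧ Q.ncard = m}
  set X := (Fin m × Fin 2 ↪ ↥T)
  have hval : ∀ e : X, Function.Injective (fun p => ((e p : α))) :=
    fun e => Subtype.coe_injective.comp e.injective
  set f : X → Y := fun e => ⟨pairsOf (fun p => (e p : α)),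
    by
      have := isPM_pairsOf (T := T) (fun p => ((e p : α))) (hval e) (fun p => (e p).2)
      exact ⟨this.1, this.2⟩⟩ with hf
  have hXcard : Nat.card X = (Nat.card ↥T).descFactorial (2 * m) := by
    simp only [Nat.card_eq_fintype_card, X]
    rw [Fintype.card_embedding_eq, Fintype.card_prod, Fintype.card_fin, Fintype.card_fin,
      mul_comm m 2]
  rw [← hXcard]
  apply gen_lower
  intro Q
  obtain ⟨e₀, hp, hrange, hT⟩ := exists_enum Q.1 T m Q.2.1 Q.2.2
  set e₀' : Fin m × Fin 2 ↪ ↥T := e₀.codRestrict T hT with he₀'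
  have key : ∀ (ρ : Equiv.Perm (Fin m)) (ε : Fin m → Fin 2),
      f ((Equiv.prodShear ρ (fun i => Equiv.addLeft (ε i))).toEmbedding.trans e₀') = Q := by
    intro ρ ε
    apply Subtype.ext
    rw [← hp]
    show Set.range (fun i : Fin m => s(e₀ (ρ i, ε i + 0), e₀ (ρ i, ε i + 1)))
        = Set.range (fun i : Fin m => s(e₀ (i, 0), e₀ (i, 1)))
    have hswap : ∀ i : Fin m, s(e₀ (ρ i, ε i + 0), e₀ (ρ i, ε i + 1))
        = s(e₀ (ρ i, 0), e₀ (ρ i, 1)) := by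
      intro i
      rcases fin2_cases (ε i) with h | h <;> rw [h]
      · norm_num
      · have h1 : (1 : Fin 2) + 0 = 1 := by decide
        have h2 : (1 : Fin 2) + 1 = 0 := by decide
        rw [h1, h2, Sym2.eq_swap]
    calc Set.range (fun i : Fin m => s(e₀ (ρ i, ε i + 0), e₀ (ρ i, ε i + 1)))
        = Set.range (fun i : Fin m => s(e₀ (ρ i, 0), e₀ (ρ i, 1))) := by
          exact congrArg Set.range (funext hswap)
      _ = Set.range ((fun i : Fin m => s(e₀ (i, 0), e₀ (i, 1))) ∘ ρ) := rfl
      _ = Set.range (fun i : Fin m => s(e₀ (i, 0), e₀ (i, 1))) :=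
          Function.Surjective.range_comp ρ.surjective _
  set θ : Equiv.Perm (Fin m) × (Fin m → Fin 2) → {e : X // f e = Q} :=
    fun g => ⟨(Equiv.prodShear g.1 (fun i => Equiv.addLeft (g.2 i))).toEmbedding.trans e₀',
      key g.1 g.2⟩ with hθ
  have hθinj : Function.Injective θ := by
    intro g g' hgg
    have hval : ∀ i : Fin m,
        (e₀' (g.1 i, g.2 i + 0) : α) = (e₀' (g'.1 i, g'.2 i + 0) : α) := by
      intro i
      have := congrArg (fun z => ((z.1 : X) (i, 0) : α)) hgg
      exact this
    have hys : ∀ i : Fin m, (g.1 i, g.2 i + 0) = (g'.1 i, g'.2 i + 0) := by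
      intro i
      exact e₀'.injective (Subtype.ext (hval i))
    have h1 : g.1 = g'.1 := Equiv.ext fun i => (Prod.mk.injEq _ _ _ _ ▸ hys i).1
    have h2 : g.2 = g'.2 := funext fun i => by
      have := (Prod.mk.injEq _ _ _ _ ▸ hys i).2
      simpa using this
    exact Prod.ext h1 h2
  calc 2 ^ m * m.factorial
      = Nat.card (Equiv.Perm (Fin m) × (Fin m → Fin 2)) := by
        simp only [Nat.card_eq_fintype_card, Fintype.card_prod, Fintype.card_perm,
          Fintype.card_fun, Fintype.card_fin]
        ring
    _ ≤ Nat.card {e : X // f e = Q} := Nat.card_le_card_of_injective θ hθinj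

section Partner
variable {α : Type*} {P : Set (Sym2 α)} (hP : IsPerfectMatching P)

noncomputable def partner (hP : IsPerfectMatching P) (x : α) : α :=
  Sym2.Mem.other ((hP.2 x).exists.choose_spec).2

lemma partner_pair_mem (x : α) : s(x, partner hP x) ∈ P := by
  rw [partner, Sym2.other_spec]
  exact ((hP.2 x).exists.choose_spec).1

lemma pair_unique {x : α} {q : Sym2 α} (hq : q ∈ P) (hx : x ∈ q) :
    q = s(x, partner hP x) := by
  obtain ⟨e, -, he⟩ := hP.2 x
  rw [he q ⟨hq, hx⟩, he s(x, partner hP x) ⟨partner_pair_mem hP x, by simp⟩]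

lemma partner_ne (x : α) : partner hP x ≠ x := by
  have h := hP.1 _ ((hP.2 x).exists.choose_spec).1
  rw [← Sym2.other_spec ((hP.2 x).exists.choose_spec).2] at h
  intro hcon
  apply h
  rw [partner] at hcon
  rw [hcon, Sym2.isDiag_iff_proj_eq]

lemma partner_partner (x : α) : partner hP (partner hP x) = x := by
  set y := partner hP x
  have h1 : s(x, y) ∈ P := partner_pair_mem hP x
  have h2 := pair_unique hP h1 (by simp : y ∈ s(x,y))
  have : partner hP y ∈ s(x, y) := by rw [h2]; simp
  rw [Sym2.mem_iff] at this
  rcases this with h | h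
  · exact h
  · exact absurd h (partner_ne hP y)

lemma partner_inj {x y : α} (h : partner hP x = partner hP y) : x = y := by
  rw [← partner_partner hP x, h, partner_partner]

end Partner

lemma total_lower {α : Type*} [Finite α] (n2 : ℕ) (hcard : Nat.card α = 2 * n2) :
    Nat.factorial (2 * n2) ≤
      Nat.card {P : Set (Sym2 α) // IsPerfectMatching P} * (2 ^ n2 * Nat.factorial n2) := by
  classical
  have : Fintype α := Fintype.ofFinite α
  set Y := {P : Set (Sym2 α) // IsPerfectMatching P}
  set X := (Fin n2 × Fin 2 ≃ α)
  have hcards : Fintype.card (Fin n2 × Fin 2) = Fintype.card α := by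
    rw [Fintype.card_prod, Fintype.card_fin, Fintype.card_fin, ← Nat.card_eq_fintype_card,
      hcard]; ring
  have hXcard : Nat.card X = Nat.factorial (2 * n2) := by
    rw [Nat.card_eq_fintype_card, Fintype.card_equiv (Fintype.equivOfCardEq hcards),
      Fintype.card_prod, Fintype.card_fin, Fintype.card_fin, mul_comm n2 2]
  have hperf : ∀ e : X, IsPerfectMatching (pairsOf (e : Fin n2 × Fin 2 → α)) := by
    intro e
    have h1 := isPM_pairsOf (T := (Set.univ : Set α)) e e.injective (fun p => Set.mem_univ _)
    refine ⟨h1.1.1, ?_⟩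
    intro x
    refine ⟨s(e ((e.symm x).1, 0), e ((e.symm x).1, 1)), ⟨⟨(e.symm x).1, rfl⟩, ?_⟩, ?_⟩
    · rcases fin2_cases (e.symm x).2 with h | h
      · have : x = e ((e.symm x).1, 0) := by
          conv_lhs => rw [← e.apply_symm_apply x]
          congr 1
          exact (Prod.ext rfl h)
        exact Sym2.mem_iff.mpr (Or.inl this)
      · have : x = e ((e.symm x).1, 1) := by
          conv_lhs => rw [← e.apply_symm_apply x]
          congr 1
          exact (Prod.ext rfl h)
        exact Sym2.mem_iff.mpr (Or.inr this)
    · rintro q ⟨⟨i, rfl⟩, hx⟩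
      rw [Sym2.mem_iff] at hx
      have : (e.symm x).1 = i := by
        rcases hx with h | h <;> rw [h, Equiv.symm_apply_apply]
      rw [this]
  set f : X → Y := fun e => ⟨pairsOf (e : Fin n2 × Fin 2 → α), hperf e⟩ with hf
  have hfib : ∀ P : Y, 1 * Nat.card {e : X // f e = P} ≤ 2 ^ n2 * Nat.factorial n2 := by
    intro P
    rw [one_mul]
    rcases isEmpty_or_nonempty {e : X // f e = P} with hemp | ⟨⟨e, he⟩⟩
    · simp [Nat.card_of_isEmpty]
    · -- injection into (Fin n2 ↪ Fin n2) × (Fin n2 → Fin 2)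
      set Φ : {e' : X // f e' = P} → (Fin n2 → Fin n2) × (Fin n2 → Fin 2) :=
        fun e' => (fun i => (e.symm (e'.1 (i, 0))).1, fun i => (e.symm (e'.1 (i, 0))).2) with hΦ
      have hpairs : ∀ (e' : {e' : X // f e' = P}) (i : Fin n2),
          ∃ j, s(e'.1 (i,0), e'.1 (i,1)) = s(e (j, 0), e (j, 1)) := by
        intro e' i
        have : s(e'.1 (i,0), e'.1 (i,1)) ∈ pairsOf (e : Fin n2 × Fin 2 → α) := by
          have h1 : s(e'.1 (i,0), e'.1 (i,1)) ∈ pairsOf (e'.1 : Fin n2 × Fin 2 → α) := ⟨i, rfl⟩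
          have h2 : pairsOf (e'.1 : Fin n2 × Fin 2 → α) = pairsOf (e : Fin n2 × Fin 2 → α) := by
            have := e'.2.trans he.symm
            exact congrArg Subtype.val this
          rwa [h2] at h1
        obtain ⟨j, hj⟩ := this
        exact ⟨j, hj.symm⟩
      have hr0 : ∀ (e' : {e' : X // f e' = P}) (i : Fin n2),
          e'.1 (i, 0) = e ((Φ e').1 i, (Φ e').2 i) := by
        intro e' i
        show _ = e ((e.symm (e'.1 (i, 0))).1, (e.symm (e'.1 (i, 0))).2)
        rw [Prod.mk.eta, Equiv.apply_symm_apply]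
      have hr1 : ∀ (e' : {e' : X // f e' = P}) (i : Fin n2),
          e'.1 (i, 1) = e ((Φ e').1 i, (Φ e').2 i + 1) := by
        intro e' i
        obtain ⟨j, hj⟩ := hpairs e' i
        have hmem0 : e'.1 (i, 0) ∈ s(e (j, 0), e (j, 1)) := by rw [← hj]; simp
        have hmem1 : e'.1 (i, 1) ∈ s(e (j, 0), e (j, 1)) := by rw [← hj]; simp
        rw [Sym2.mem_iff] at hmem0 hmem1
        have hj_eq : j = (Φ e').1 i := by
          rcases hmem0 with h | h
          · have := congrArg e.symm h
            rw [Equiv.symm_apply_apply] at this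
            show _ = (e.symm (e'.1 (i, 0))).1
            rw [this]
          · have := congrArg e.symm h
            rw [Equiv.symm_apply_apply] at this
            show _ = (e.symm (e'.1 (i, 0))).1
            rw [this]
        have hne01 : e'.1 (i, 1) ≠ e'.1 (i, 0) := by
          intro hcon
          have := e'.1.injective hcon
          simp at this
        have hc0 : e'.1 (i, 0) = e (j, (Φ e').2 i) := by rw [hr0 e' i, ← hj_eq]
        rcases hmem1 with h | h
        · rcases fin2_cases ((Φ e').2 i) with hφ | hφ
          · exfalso; apply hne01; rw [h, hc0, hφ]
          · rw [h, hj_eq, hφ, show (1:Fin 2)+1 = 0 from rfl]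
        · rcases fin2_cases ((Φ e').2 i) with hφ | hφ
          · rw [h, hj_eq, hφ, show (0:Fin 2)+1 = 1 from rfl]
          · exfalso; apply hne01; rw [h, hc0, hφ]
      have hΦinj : Function.Injective Φ := by
        intro e1 e2 h12
        apply Subtype.ext
        apply Equiv.ext
        rintro ⟨i, j⟩
        rcases fin2_cases j with h | h <;> subst h
        · rw [hr0 e1 i, hr0 e2 i, h12]
        · rw [hr1 e1 i, hr1 e2 i, h12]
      have fin2_or : ∀ x y : Fin 2, y = x ∨ y = x + 1 := by decide
      have hτinj : ∀ e' : {e' : X // f e' = P}, Function.Injective ((Φ e').1) := by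
        intro e' i i' hii
        have h0 := hr0 e' i
        have h0' := hr0 e' i'
        have h1 := hr1 e' i
        rcases fin2_or ((Φ e').2 i) ((Φ e').2 i') with heq | heq
        · have hx : e'.1 (i, 0) = e'.1 (i', 0) := by rw [h0, h0', hii, heq]
          have := e'.1.injective hx
          exact (Prod.mk.injEq _ _ _ _ ▸ this).1
        · have hx : e'.1 (i, 1) = e'.1 (i', 0) := by rw [h1, h0', hii, heq]
          have := e'.1.injective hx
          simp at this
      set Ψ : {e' : X // f e' = P} → (Fin n2 ↪ Fin n2) × (Fin n2 → Fin 2) :=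
        fun e' => (⟨(Φ e').1, hτinj e'⟩, (Φ e').2) with hΨ
      have hΨinj : Function.Injective Ψ := by
        intro e1 e2 h12
        apply hΦinj
        have h1 := congrArg Prod.fst h12
        have h2 := congrArg Prod.snd h12
        simp only [hΨ] at h1 h2
        exact Prod.ext (congrArg (fun (g : Fin n2 ↪ Fin n2) => (g : Fin n2 → Fin n2)) h1) h2
      calc Nat.card {e' : X // f e' = P}
          ≤ Nat.card ((Fin n2 ↪ Fin n2) × (Fin n2 → Fin 2)) :=
            Nat.card_le_card_of_injective Ψ hΨinj
        _ = 2 ^ n2 * Nat.factorial n2 := by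
            simp only [Nat.card_eq_fintype_card, Fintype.card_prod, Fintype.card_embedding_eq,
              Fintype.card_fun, Fintype.card_fin, Nat.descFactorial_self]
            ring
  have := gen_upper f (2 ^ n2 * Nat.factorial n2) 1 hfib
  rw [one_mul, hXcard] at this
  exact this

lemma main_count {α : Type*} [Finite α] (S : Set α) (E n2 a : ℕ)
    (hcard : Nat.card α = 2 * n2) (hS : S.ncard = a) (hE : 2 * E ≤ a) (ha : a ≤ n2 + E) :
    Nat.card {P : Set (Sym2 α) // IsPerfectMatching P ∧ {e ∈ P | ∀ x ∈ e, x ∈ S}.ncard = E} *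
      (2 ^ E * Nat.factorial E * Nat.factorial (a - 2*E) *
        (2 ^ (n2 + E - a) * Nat.factorial (n2 + E - a)))
      ≤ Nat.factorial a * Nat.factorial (2*n2 - a) := by
  classical
  have : Fintype α := Fintype.ofFinite α
  set m := a - 2*E with hm
  set k := n2 + E - a with hk
  set b := 2*n2 - a with hb
  have hab : a ≤ 2*n2 := by omega
  have harith1 : 2*E + m = a := by omega
  have harith2 : m + 2*k = b := by omega
  have harith3 : E + m + k = n2 := by omega
  set X := {P : Set (Sym2 α) // IsPerfectMatching P ∧ {e ∈ P | ∀ x ∈ e, x ∈ S}.ncard = E}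
  set Y₁ := {Q : Set (Sym2 α) // IsPM Q S ∧ Q.ncard = E}
  set f₁ : X → Y₁ := fun P => ⟨{e ∈ P.1 | ∀ x ∈ e, x ∈ S},
    ⟨⟨fun e he => P.2.1.1 e he.1, fun e he x hx => he.2 x hx,
      fun e he q hq x hxe hxq => by
        obtain ⟨r, -, hu⟩ := P.2.1.2 x
        rw [hu e ⟨he.1, hxe⟩, hu q ⟨hq.1, hxq⟩]⟩, P.2.2⟩⟩ with hf₁
  have hSc : (Sᶜ : Set α).ncard = b := by
    have := Set.ncard_add_ncard_compl S
    omega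
  -- Claim A : fiber bound for f₁
  have claimA : ∀ Q₁ : Y₁, (2 ^ k * Nat.factorial k) * Nat.card {P : X // f₁ P = Q₁}
      ≤ b.descFactorial m * Nat.factorial (2*k) := by
    intro Q₁
    set V₁ := {x | ∃ q ∈ Q₁.1, x ∈ q} with hV₁
    have hV₁S : V₁ ⊆ S := fun x ⟨q, hq, hx⟩ => Q₁.2.1.2.1 q hq x hx
    have hV₁card : V₁.ncard = 2*E := vset_ncard Q₁.2.1 Q₁.2.2
    set T₂ := S \ V₁ with hT₂
    have hT₂card : T₂.ncard = m := by
      rw [hT₂, Set.ncard_diff hV₁S, hV₁card, hS]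
    set fX := {P : X // f₁ P = Q₁}
    -- every element of T₂ has partner outside S
    have hQsub : ∀ P : fX, Q₁.1 ⊆ P.1.1 := by
      intro P
      have hfP : {e ∈ P.1.1 | ∀ x ∈ e, x ∈ S} = Q₁.1 := congrArg Subtype.val P.2
      rw [← hfP]
      exact fun e he => he.1
    have hcross : ∀ (P : fX) (t : α), t ∈ T₂ → partner P.1.2.1 t ∈ (Sᶜ : Set α) := by
      intro P t ht
      set hPP := P.1.2.1
      intro hcon
      have hfP : {e ∈ P.1.1 | ∀ x ∈ e, x ∈ S} = Q₁.1 := congrArg Subtype.val P.2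
      have hqin : s(t, partner hPP t) ∈ Q₁.1 := by
        rw [← hfP]
        refine ⟨partner_pair_mem hPP t, ?_⟩
        intro x hx
        rw [Sym2.mem_iff] at hx
        rcases hx with rfl | rfl
        · exact ht.1
        · exact hcon
      exact ht.2 ⟨s(t, partner hPP t), hqin, by simp⟩
    set f₂ : fX → (↥T₂ ↪ ↥(Sᶜ : Set α)) := fun P =>
      ⟨fun t => ⟨partner P.1.2.1 t.1, hcross P t.1 t.2⟩,
        fun t t' htt => Subtype.ext (partner_inj P.1.2.1 (congrArg Subtype.val htt))⟩ with hf₂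
    have hY₂card : Nat.card (↥T₂ ↪ ↥(Sᶜ : Set α)) = b.descFactorial m := by
      rw [Nat.card_eq_fintype_card, Fintype.card_embedding_eq, ← Nat.card_eq_fintype_card,
        ← Nat.card_eq_fintype_card, Nat.card_coe_set_eq, Nat.card_coe_set_eq,
        hT₂card, hSc]
    -- fiber bound for f₂
    have claimB : ∀ g : (↥T₂ ↪ ↥(Sᶜ : Set α)),
        (2 ^ k * Nat.factorial k) * Nat.card {P : fX // f₂ P = g} ≤ Nat.factorial (2*k) := by
      intro g
      set Rg := Set.range (fun t : ↥T₂ => ((g t : α))) with hRg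
      have hRgS : Rg ⊆ (Sᶜ : Set α) := by rintro x ⟨t, rfl⟩; exact (g t).2
      have hRgcard : Rg.ncard = m := by
        have hinj : Function.Injective (fun t : ↥T₂ => ((g t : α))) :=
          fun t t' h => g.injective (Subtype.ext h)
        rw [hRg, ← Nat.card_coe_set_eq, Nat.card_range_of_injective hinj,
          Nat.card_coe_set_eq, hT₂card]
      set B₃ := (Sᶜ : Set α) \ Rg with hB₃
      have hB₃card : B₃.ncard = 2*k := by
        rw [hB₃, Set.ncard_diff hRgS, hRgcard, hSc]; omega
      set Y₃ := {R : Set (Sym2 α) // IsPM R B₃ ∧ R.ncard = k} with hY₃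
      -- the map extracting the B-side matching
      have main3 : ∀ P : {P : fX // f₂ P = g},
          IsPM {e ∈ P.1.1.1 | ∀ x ∈ e, x ∈ (Sᶜ : Set α)} B₃ ∧
          {e ∈ P.1.1.1 | ∀ x ∈ e, x ∈ (Sᶜ : Set α)}.ncard = k ∧
          P.1.1.1 = Q₁.1 ∪ Set.range (fun t : ↥T₂ => s(t.1, (g t : α)))
              ∪ {e ∈ P.1.1.1 | ∀ x ∈ e, x ∈ (Sᶜ : Set α)} := by
        intro P
        set PP := P.1.1.1 with hPPdef
        have hPP : IsPerfectMatching PP := P.1.1.2.1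
        have hfP : {e ∈ PP | ∀ x ∈ e, x ∈ S} = Q₁.1 := congrArg Subtype.val P.1.2
        have hgt : ∀ t : ↥T₂, partner hPP t.1 = (g t : α) := by
          intro t
          have h1 := congrArg (fun (z : ↥T₂ ↪ ↥(Sᶜ : Set α)) => ((z t : α))) P.2
          exact h1
        set PBB := {e ∈ PP | ∀ x ∈ e, x ∈ (Sᶜ : Set α)} with hPBB
        set Mix := {e ∈ PP | (∃ x ∈ e, x ∈ S) ∧ ∃ x ∈ e, x ∈ (Sᶜ : Set α)} with hMix
        have hQ₁sub : Q₁.1 ⊆ PP := hQsub P.1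
        -- Mix is the range of the pairing map
        have hMixrange : Mix = Set.range (fun t : ↥T₂ => s(t.1, (g t : α))) := by
          ext e
          constructor
          · rintro ⟨he, ⟨x, hxe, hxS⟩, ⟨y, hye, hyS⟩⟩
            have hxT₂ : x ∈ T₂ := by
              refine ⟨hxS, ?_⟩
              rintro ⟨q, hq, hxq⟩
              have hqPP : q ∈ PP := hQ₁sub hq
              have : e = q := by
                obtain ⟨r, -, hu⟩ := hPP.2 x
                rw [hu e ⟨he, hxe⟩, hu q ⟨hqPP, hxq⟩]
              subst this
              exact hyS (Q₁.2.1.2.1 e hq y hye)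
            refine ⟨⟨x, hxT₂⟩, ?_⟩
            have h5 := pair_unique hPP he hxe
            show s(x, (g ⟨x, hxT₂⟩ : α)) = e
            rw [← hgt ⟨x, hxT₂⟩]
            exact h5.symm
          · rintro ⟨t, rfl⟩
            show s(t.1, (g t : α)) ∈ Mix
            rw [← hgt t]
            refine ⟨partner_pair_mem hPP t.1, ⟨t.1, by simp, t.2.1⟩,
              ⟨partner hPP t.1, by simp, ?_⟩⟩
            rw [hgt t]
            exact (g t).2
        have hMixcard : Mix.ncard = m := by
          rw [hMixrange, ← Nat.card_coe_set_eq]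
          have hinj : Function.Injective (fun t : ↥T₂ => s(t.1, (g t : α))) := by
            intro t t' htt
            have htt' : s(t.1, (g t : α)) = s(t'.1, (g t' : α)) := htt
            have h1 : t.1 ∈ s(t'.1, (g t' : α)) := by rw [← htt']; simp
            rw [Sym2.mem_iff] at h1
            rcases h1 with h | h
            · exact Subtype.ext h
            · exfalso; exact (g t').2 (h ▸ t.2.1)
          rw [Nat.card_range_of_injective hinj, Nat.card_coe_set_eq, hT₂card]
        -- partition of PP
        have hpart : PP = Q₁.1 ∪ Mix ∪ PBB := by
          ext e
          constructor
          · intro he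
            by_cases hall : ∀ x ∈ e, x ∈ S
            · exact Or.inl (Or.inl (by rw [← hfP]; exact ⟨he, hall⟩))
            · push_neg at hall
              by_cases hall2 : ∀ x ∈ e, x ∈ (Sᶜ : Set α)
              · exact Or.inr ⟨he, hall2⟩
              · push_neg at hall2
                obtain ⟨y, hye, hyS⟩ := hall
                obtain ⟨x, hxe, hxS⟩ := hall2
                simp only [Set.mem_compl_iff, not_not] at hxS
                exact Or.inl (Or.inr ⟨he, ⟨x, hxe, hxS⟩, ⟨y, hye, hyS⟩⟩)
          · rintro ((h | h) | h)
            · exact hQ₁sub h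
            · exact h.1
            · exact h.1
        have hd1 : Disjoint Q₁.1 Mix := by
          rw [Set.disjoint_left]
          rintro e he ⟨-, -, y, hye, hyS⟩
          exact hyS (Q₁.2.1.2.1 e he y hye)
        have hd2 : Disjoint (Q₁.1 ∪ Mix) PBB := by
          rw [Set.disjoint_left]
          rintro e (he | he) ⟨-, hall⟩
          · exact hall e.out.1 (Sym2.out_fst_mem e) (Q₁.2.1.2.1 e he _ (Sym2.out_fst_mem e))
          · obtain ⟨-, ⟨x, hxe, hxS⟩, -⟩ := he
            exact hall x hxe hxS
        have hPPcard : PP.ncard = n2 := by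
          have := perfect_ncard hPP
          omega
        have hPBBcard : PBB.ncard = k := by
          have h1 : PP.ncard = (Q₁.1 ∪ Mix).ncard + PBB.ncard := by
            rw [hpart, Set.ncard_union_eq hd2 (Set.toFinite _) (Set.toFinite _)]
          have h2 : (Q₁.1 ∪ Mix).ncard = E + m := by
            rw [Set.ncard_union_eq hd1 (Set.toFinite _) (Set.toFinite _), Q₁.2.2, hMixcard]
          omega
        refine ⟨⟨fun e he => hPP.1 e he.1, fun e he x hx => ?_, ?_⟩, hPBBcard, ?_⟩
        · -- membership in B₃
          refine ⟨he.2 x hx, ?_⟩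
          rintro ⟨t, htx⟩
          have htx' : ((g t : α)) = x := htx
          have hpair : s(t.1, (g t : α)) ∈ PP := by
            rw [← hgt t]; exact partner_pair_mem hPP t.1
          have : e = s(t.1, (g t : α)) := by
            obtain ⟨r, -, hu⟩ := hPP.2 x
            rw [hu e ⟨he.1, hx⟩, hu s(t.1, (g t : α)) ⟨hpair, by rw [← htx']; simp⟩]
          rw [this] at he
          exact (he.2 t.1 (by simp)) t.2.1
        · rintro e he q hq x hxe hxq
          obtain ⟨r, -, hu⟩ := hPP.2 x
          rw [hu e ⟨he.1, hxe⟩, hu q ⟨hq.1, hxq⟩]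
        · rw [← hMixrange]
          exact hpart
      set f₃ : {P : fX // f₂ P = g} → Y₃ :=
        fun P => ⟨{e ∈ P.1.1.1 | ∀ x ∈ e, x ∈ (Sᶜ : Set α)}, (main3 P).1, (main3 P).2.1⟩ with hf₃
      have hf₃inj : Function.Injective f₃ := by
        intro P P' hPP'
        have h1 : {e ∈ P.1.1.1 | ∀ x ∈ e, x ∈ (Sᶜ : Set α)}
            = {e ∈ P'.1.1.1 | ∀ x ∈ e, x ∈ (Sᶜ : Set α)} := congrArg Subtype.val hPP'
        have h2 : P.1.1.1 = P'.1.1.1 := by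
          rw [(main3 P).2.2, (main3 P').2.2, h1]
        exact Subtype.ext (Subtype.ext (Subtype.ext h2))
      have hcard3 := pm_count B₃ k
      have hB₃n : Nat.card ↥B₃ = 2*k := by rw [Nat.card_coe_set_eq, hB₃card]
      rw [hB₃n, Nat.descFactorial_self] at hcard3
      calc (2 ^ k * Nat.factorial k) * Nat.card {P : fX // f₂ P = g}
          ≤ (2 ^ k * Nat.factorial k) * Nat.card Y₃ :=
            Nat.mul_le_mul_left _ (Nat.card_le_card_of_injective f₃ hf₃inj)
        _ = Nat.card Y₃ * (2 ^ k * Nat.factorial k) := Nat.mul_comm _ _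
        _ ≤ Nat.factorial (2*k) := hcard3
    have := gen_upper f₂ (Nat.factorial (2*k)) (2 ^ k * Nat.factorial k) claimB
    rw [hY₂card] at this
    exact this
  have step1 := gen_upper f₁ (b.descFactorial m * Nat.factorial (2*k))
    (2 ^ k * Nat.factorial k) claimA
  have step2 := pm_count S E
  rw [Nat.card_coe_set_eq, hS] at step2
  -- combine
  have hfact1 : a.descFactorial (2*E) * Nat.factorial m = Nat.factorial a := by
    have := Nat.factorial_mul_descFactorial hE
    rw [← hm] at this
    rw [Nat.mul_comm]
    exact this
  have hfact2 : b.descFactorial m * Nat.factorial (2*k) = Nat.factorial b := by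
    have hmb : m ≤ b := by omega
    have := Nat.factorial_mul_descFactorial hmb
    have hbm : b - m = 2*k := by omega
    rw [hbm] at this
    rw [Nat.mul_comm]
    exact this
  calc Nat.card X * (2 ^ E * Nat.factorial E * Nat.factorial m
        * (2 ^ k * Nat.factorial k))
      = Nat.factorial m * ((2 ^ E * Nat.factorial E)
          * ((2 ^ k * Nat.factorial k) * Nat.card X)) := by ring
    _ ≤ Nat.factorial m * ((2 ^ E * Nat.factorial E)
          * (Nat.card Y₁ * (b.descFactorial m * Nat.factorial (2*k)))) := by
        exact Nat.mul_le_mul_left _ (Nat.mul_le_mul_left _ step1)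
    _ = Nat.factorial m * ((Nat.card Y₁ * (2 ^ E * Nat.factorial E))
          * (b.descFactorial m * Nat.factorial (2*k))) := by ring
    _ ≤ Nat.factorial m * (a.descFactorial (2*E)
          * (b.descFactorial m * Nat.factorial (2*k))) := by
        exact Nat.mul_le_mul_left _ (Nat.mul_le_mul_right _ step2)
    _ = (a.descFactorial (2*E) * Nat.factorial m)
          * (b.descFactorial m * Nat.factorial (2*k)) := by ring
    _ = Nat.factorial a * Nat.factorial b := by rw [hfact1, hfact2]

noncomputable def stirL (n : ℕ) : ℝ := ((n : ℝ) / Real.exp 1) ^ n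

lemma stirL_pos (n : ℕ) : 0 < stirL n := by
  rcases Nat.eq_zero_or_pos n with h | h
  · subst h; simp [stirL]
  · apply pow_pos
    have : (0:ℝ) < n := by exact_mod_cast h
    positivity

lemma one_add_inv_pow_le (n : ℕ) : (1 + 1/(n:ℝ))^n ≤ Real.exp 1 := by
  rcases Nat.eq_zero_or_pos n with h | h
  · subst h; simpa using Real.one_le_exp (by norm_num)
  · have hn : (0:ℝ) < n := by exact_mod_cast h
    have h1 : 1 + 1/(n:ℝ) ≤ Real.exp (1/(n:ℝ)) := by
      have := Real.add_one_le_exp (1/(n:ℝ)); linarith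
    calc (1 + 1/(n:ℝ))^n ≤ (Real.exp (1/(n:ℝ)))^n := by
          apply pow_le_pow_left₀ (by positivity) h1
      _ = Real.exp 1 := by
          rw [← Real.exp_nat_mul]
          congr 1
          field_simp

lemma exp_le_one_add_inv_pow (n : ℕ) (hn : 1 ≤ n) : Real.exp 1 ≤ (1 + 1/(n:ℝ))^(n+1) := by
  have hn' : (1:ℝ) ≤ n := by exact_mod_cast hn
  have hpos : (0:ℝ) < 1 - 1/((n:ℝ)+1) := by
    have : 1/((n:ℝ)+1) < 1 := by
      rw [div_lt_one (by linarith)]; linarith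
    linarith
  have h1 : Real.exp (1/((n:ℝ)+1)) ≤ 1 + 1/(n:ℝ) := by
    have h := Real.add_one_le_exp (-(1/((n:ℝ)+1)))
    calc Real.exp (1/((n:ℝ)+1)) = (Real.exp (-(1/((n:ℝ)+1))))⁻¹ := by
          rw [Real.exp_neg, inv_inv]
      _ ≤ (1 - 1/((n:ℝ)+1))⁻¹ := by
          apply inv_anti₀ hpos
          linarith
      _ = 1 + 1/(n:ℝ) := by
          have h9 : (1 - 1/((n:ℝ)+1)) = (n:ℝ)/((n:ℝ)+1) := by
            field_simp
            ring
          rw [h9, inv_div]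
          rw [div_eq_iff (by linarith : (n:ℝ) ≠ 0)]
          field_simp
  calc Real.exp 1 = (Real.exp (1/((n:ℝ)+1)))^(n+1) := by
        rw [← Real.exp_nat_mul]
        congr 1
        push_cast
        field_simp
    _ ≤ (1 + 1/(n:ℝ))^(n+1) := pow_le_pow_left₀ (Real.exp_pos _).le h1 _

lemma stirL_split (n : ℕ) (h : 0 < n) :
    stirL (n+1) = stirL n * ((1 + 1/(n:ℝ))^n * (((n:ℝ)+1)/Real.exp 1)) := by
  have hn : (0:ℝ) < n := by exact_mod_cast h
  have he : (0:ℝ) < Real.exp 1 := Real.exp_pos 1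
  have hbase : ((n:ℝ)+1)/Real.exp 1 = ((n:ℝ)/Real.exp 1) * (1 + 1/(n:ℝ)) := by
    field_simp
  simp only [stirL]
  push_cast
  rw [pow_succ, hbase, mul_pow]
  ring

lemma fact_lower (n : ℕ) : stirL n ≤ (Nat.factorial n : ℝ) := by
  induction n with
  | zero => simp [stirL]
  | succ n ih =>
    rcases Nat.eq_zero_or_pos n with h | h
    · subst h
      have h1 : stirL 1 = 1/Real.exp 1 := by simp [stirL]
      rw [h1, Nat.factorial_one, Nat.cast_one, div_le_one (Real.exp_pos 1)]
      exact Real.one_le_exp (by norm_num)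
    · have hn : (0:ℝ) < n := by exact_mod_cast h
      rw [stirL_split n h]
      have h2 : (1 + 1/(n:ℝ))^n * (((n:ℝ)+1)/Real.exp 1) ≤ ((n:ℝ)+1) := by
        calc (1 + 1/(n:ℝ))^n * (((n:ℝ)+1)/Real.exp 1)
            ≤ Real.exp 1 * (((n:ℝ)+1)/Real.exp 1) := by
              apply mul_le_mul_of_nonneg_right (one_add_inv_pow_le n) (by positivity)
          _ = (n:ℝ)+1 := by field_simp
      calc stirL n * ((1 + 1/(n:ℝ))^n * (((n:ℝ)+1)/Real.exp 1))
          ≤ (Nat.factorial n : ℝ) * ((n:ℝ)+1) := by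
            apply mul_le_mul ih h2 (by positivity) (by positivity)
        _ = (Nat.factorial (n+1) : ℝ) := by
            rw [Nat.factorial_succ]; push_cast; ring

lemma fact_upper (n : ℕ) : (Nat.factorial n : ℝ) ≤ Real.exp 1 * ((n:ℝ)+1) * stirL n := by
  have main : ∀ j : ℕ, 1 ≤ j → (Nat.factorial j : ℝ) ≤ Real.exp 1 * (j:ℝ) * stirL j := by
    intro j hj
    induction j with
    | zero => omega
    | succ n ih =>
      rcases Nat.eq_zero_or_pos n with h | h
      · subst h
        have h1 : stirL 1 = 1/Real.exp 1 := by simp [stirL]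
        have h2 : Real.exp 1 * ((1:ℕ):ℝ) * (1/Real.exp 1) = 1 := by
          field_simp
          norm_num
        rw [h1, h2, Nat.factorial_one, Nat.cast_one]
      · have ihn := ih h
        have hn : (0:ℝ) < n := by exact_mod_cast h
        have hkey : Real.exp 1 ≤ (1 + 1/(n:ℝ))^(n+1) := exp_le_one_add_inv_pow n h
        have h4 : (n:ℝ) * ((1 + 1/(n:ℝ))^(n+1)) = ((n:ℝ)+1) * (1 + 1/(n:ℝ))^n := by
          rw [pow_succ]
          have h5 : (n:ℝ) * (1 + 1/(n:ℝ)) = (n:ℝ)+1 := by field_simp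
          calc (n:ℝ) * ((1 + 1/(n:ℝ))^n * (1 + 1/(n:ℝ)))
              = ((n:ℝ) * (1 + 1/(n:ℝ))) * (1 + 1/(n:ℝ))^n := by ring
            _ = ((n:ℝ)+1) * (1 + 1/(n:ℝ))^n := by rw [h5]
        calc (Nat.factorial (n+1) : ℝ) = ((n:ℝ)+1) * Nat.factorial n := by
              rw [Nat.factorial_succ]; push_cast; ring
          _ ≤ ((n:ℝ)+1) * (Real.exp 1 * (n:ℝ) * stirL n) := by
              apply mul_le_mul_of_nonneg_left ihn (by positivity)
          _ = ((n:ℝ)+1) * ((n:ℝ) * Real.exp 1) * stirL n := by ring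
          _ ≤ ((n:ℝ)+1) * (((n:ℝ)+1) * (1 + 1/(n:ℝ))^n) * stirL n := by
              apply mul_le_mul_of_nonneg_right _ (stirL_pos n).le
              apply mul_le_mul_of_nonneg_left _ (by positivity)
              calc (n:ℝ) * Real.exp 1 ≤ (n:ℝ) * ((1 + 1/(n:ℝ))^(n+1)) :=
                    mul_le_mul_of_nonneg_left hkey (by positivity)
                _ = ((n:ℝ)+1) * (1 + 1/(n:ℝ))^n := h4
          _ = Real.exp 1 * ((n:ℝ)+1) * (stirL n * ((1 + 1/(n:ℝ))^n * (((n:ℝ)+1)/Real.exp 1))) := by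
              field_simp
          _ = Real.exp 1 * ((n:ℝ)+1) * stirL (n+1) := by rw [← stirL_split n h]
          _ = Real.exp 1 * (((n+1:ℕ):ℝ)) * stirL (n+1) := by push_cast; ring
  rcases Nat.eq_zero_or_pos n with h | h
  · subst h
    simp only [stirL, Nat.factorial, Nat.cast_zero, pow_zero, mul_one, zero_add, Nat.cast_one]
    exact Real.one_le_exp (by norm_num)
  · calc (Nat.factorial n : ℝ) ≤ Real.exp 1 * (n:ℝ) * stirL n := main n h
      _ ≤ Real.exp 1 * ((n:ℝ)+1) * stirL n := by
          apply mul_le_mul_of_nonneg_right _ (stirL_pos n).le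
          apply mul_le_mul_of_nonneg_left (by linarith) (Real.exp_pos 1).le

lemma log_stirL (n : ℕ) : Real.log (stirL n) = n * Real.log n - n := by
  rcases Nat.eq_zero_or_pos n with h | h
  · subst h; simp [stirL]
  · have hn : (0:ℝ) < n := by exact_mod_cast h
    simp only [stirL]
    rw [Real.log_pow, Real.log_div hn.ne' (Real.exp_pos 1).ne', Real.log_exp]
    ring

lemma nat_entH (u n : ℕ) (hn : 0 < n) :
    ((n:ℝ)) * entH ((u:ℝ)/(n:ℝ)) = -(u:ℝ) * Real.log u + (u:ℝ) * Real.log n := by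
  rcases Nat.eq_zero_or_pos u with h | h
  · subst h; simp [entH]
  · have hu : (0:ℝ) < u := by exact_mod_cast h
    have hn' : (0:ℝ) < n := by exact_mod_cast hn
    simp only [entH]
    rw [Real.log_div hu.ne' hn'.ne']
    field_simp
    ring

lemma dbl_log (u : ℕ) :
    (u:ℝ) * Real.log (2*(u:ℝ)) = (u:ℝ) * Real.log 2 + (u:ℝ) * Real.log u := by
  rcases Nat.eq_zero_or_pos u with h | h
  · subst h; simp
  · have hu : (0:ℝ) < u := by exact_mod_cast h
    rw [Real.log_mul (by norm_num) hu.ne']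
    ring

lemma stir_ident (E m k : ℕ) (ha : 1 ≤ 2*E + m) :
    (2:ℝ)^((E+m+k : ℕ)) * (stirL (2*E+m) * stirL (m+2*k) * stirL (E+m+k))
      = Real.exp ((2*((E+m+k : ℕ):ℝ)) *
          entF (((2*E+m : ℕ):ℝ)/(2*((E+m+k : ℕ):ℝ))) ((2*(E:ℝ))/(((2*E+m : ℕ)):ℝ)))
        * ((2:ℝ)^E * 2^k * (stirL E * stirL m * stirL k * stirL (2*(E+m+k)))) := by
  have hn2 : 0 < E+m+k := by omega
  have hn2' : (0:ℝ) < ((E+m+k : ℕ):ℝ) := by exact_mod_cast hn2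
  have ha' : (0:ℝ) < ((2*E+m : ℕ):ℝ) := by exact_mod_cast ha
  -- argument identities
  have A1 : ((2*(E:ℝ))/((2*E+m : ℕ):ℝ)) * (((2*E+m : ℕ):ℝ)/(2*((E+m+k : ℕ):ℝ)))
      = ((2*E : ℕ):ℝ)/((2*(E+m+k):ℕ):ℝ) := by
    push_cast
    rw [div_mul_div_comm, mul_comm ((2*(E:ℝ)+m)) (2*((E:ℝ)+m+k))]
    rw [mul_div_mul_right _ _ (by push_cast at ha' ⊢; linarith : (2*(E:ℝ)+(m:ℝ)) ≠ 0)]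
  have A2 : (1 - (2*(E:ℝ))/((2*E+m : ℕ):ℝ)) * (((2*E+m : ℕ):ℝ)/(2*((E+m+k : ℕ):ℝ)))
      = ((m : ℕ):ℝ)/((2*(E+m+k):ℕ):ℝ) := by
    push_cast
    push_cast at ha' hn2'
    field_simp
    ring
  have A3 : 1 - (2 - (2*(E:ℝ))/((2*E+m : ℕ):ℝ)) * (((2*E+m : ℕ):ℝ)/(2*((E+m+k : ℕ):ℝ)))
      = ((2*k : ℕ):ℝ)/((2*(E+m+k):ℕ):ℝ) := by
    push_cast
    push_cast at ha' hn2'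
    field_simp
    ring
  have A4 : ((2*E+m:ℕ):ℝ)/(2*((E+m+k : ℕ):ℝ)) = ((2*E+m:ℕ):ℝ)/((2*(E+m+k):ℕ):ℝ) := by
    push_cast; ring_nf
  have A5 : 1 - ((2*E+m:ℕ):ℝ)/(2*((E+m+k : ℕ):ℝ)) = ((m+2*k:ℕ):ℝ)/((2*(E+m+k):ℕ):ℝ) := by
    push_cast
    push_cast at hn2'
    field_simp
    ring
  have h2n2 : (0:ℕ) < 2*(E+m+k) := by omega
  have B1 := nat_entH (2*E) (2*(E+m+k)) h2n2
  have B2 := nat_entH m (2*(E+m+k)) h2n2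
  have B3 := nat_entH (2*k) (2*(E+m+k)) h2n2
  have B4 := nat_entH (2*E+m) (2*(E+m+k)) h2n2
  have B5 := nat_entH (m+2*k) (2*(E+m+k)) h2n2
  have key : (2*((E+m+k : ℕ):ℝ)) *
        entF (((2*E+m : ℕ):ℝ)/(2*((E+m+k : ℕ):ℝ))) ((2*(E:ℝ))/(((2*E+m : ℕ)):ℝ))
      = -(E:ℝ)*Real.log ((2*E:ℕ):ℝ) - (m:ℝ)*Real.log ((m:ℕ):ℝ)
        - (k:ℝ)*Real.log ((2*k:ℕ):ℝ)
        + ((2*E+m:ℕ):ℝ)*Real.log ((2*E+m:ℕ):ℝ) + ((m+2*k:ℕ):ℝ)*Real.log ((m+2*k:ℕ):ℝ)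
        - ((E+m+k:ℕ):ℝ)*Real.log ((2*(E+m+k):ℕ):ℝ) := by
    rw [entF, entHH, A1, A2, A3, A5, A4]
    have expand : ∀ h1 h2 h3 h4 h5 c : ℝ, 2*c * (1/2 * h1 + h2 + 1/2*h3 - (h4 + h5))
        = (1/2) * (2*c*h1) + (2*c*h2) + (1/2)*(2*c*h3) - (2*c*h4) - (2*c*h5) := by
      intros; ring
    rw [expand]
    have hc : (2*((E+m+k:ℕ):ℝ)) = ((2*(E+m+k):ℕ):ℝ) := by push_cast; ring
    rw [hc, B1, B2, B3, B4, B5]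
    push_cast
    ring
  -- both sides positive; compare logs
  have pa := (stirL_pos (2*E+m)).ne'
  have pb := (stirL_pos (m+2*k)).ne'
  have pn := (stirL_pos (E+m+k)).ne'
  have pE := (stirL_pos E).ne'
  have pm := (stirL_pos m).ne'
  have pk := (stirL_pos k).ne'
  have p2n := (stirL_pos (2*(E+m+k))).ne'
  have q1 : ((2:ℝ)^((E+m+k:ℕ))) ≠ 0 := by positivity
  have q2 : ((2:ℝ)^E) ≠ 0 := by positivity
  have q3 : ((2:ℝ)^k) ≠ 0 := by positivity
  have hL : (0:ℝ) < (2:ℝ)^((E+m+k : ℕ)) * (stirL (2*E+m) * stirL (m+2*k) * stirL (E+m+k)) := by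
    have := stirL_pos (2*E+m); have := stirL_pos (m+2*k); have := stirL_pos (E+m+k)
    positivity
  have hR : (0:ℝ) < Real.exp ((2*((E+m+k : ℕ):ℝ)) *
          entF (((2*E+m : ℕ):ℝ)/(2*((E+m+k : ℕ):ℝ))) ((2*(E:ℝ))/(((2*E+m : ℕ)):ℝ)))
        * ((2:ℝ)^E * 2^k * (stirL E * stirL m * stirL k * stirL (2*(E+m+k)))) := by
    have := stirL_pos E; have := stirL_pos m; have := stirL_pos k
    have := stirL_pos (2*(E+m+k))
    positivity
  rw [← Real.exp_log hL, ← Real.exp_log hR]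
  congr 1
  rw [Real.log_mul q1 (mul_ne_zero (mul_ne_zero pa pb) pn),
    Real.log_mul (mul_ne_zero pa pb) pn, Real.log_mul pa pb, Real.log_pow,
    Real.log_mul (Real.exp_pos _).ne'
      (mul_ne_zero (mul_ne_zero q2 q3)
        (mul_ne_zero (mul_ne_zero (mul_ne_zero pE pm) pk) p2n)),
    Real.log_mul (mul_ne_zero q2 q3)
      (mul_ne_zero (mul_ne_zero (mul_ne_zero pE pm) pk) p2n),
    Real.log_mul q2 q3,
    Real.log_mul (mul_ne_zero (mul_ne_zero pE pm) pk) p2n,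
    Real.log_mul (mul_ne_zero pE pm) pk, Real.log_mul pE pm,
    Real.log_exp, Real.log_pow, Real.log_pow, key,
    log_stirL, log_stirL, log_stirL, log_stirL, log_stirL, log_stirL, log_stirL]
  have D1 := dbl_log E
  have D2 := dbl_log k
  have D3 := dbl_log (E+m+k)
  push_cast at D1 D2 D3 ⊢
  linear_combination D1 + D2 - D3

lemma exp_one_le_three : Real.exp 1 ≤ 3 := by
  have := Real.exp_one_lt_d9
  linarith

lemma analytic (E m k : ℕ) (ha : 1 ≤ 2*E + m) (hn2 : 1 ≤ E+m+k) :
    (Nat.factorial (2*E+m) : ℝ) * (Nat.factorial (m+2*k))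
        * ((2:ℝ)^((E+m+k:ℕ)) * Nat.factorial (E+m+k))
      ≤ (2*((E+m+k:ℕ):ℝ) + 1)^(6:ℝ)
        * Real.exp ((2*((E+m+k:ℕ):ℝ)) *
            entF (((2*E+m:ℕ):ℝ)/(2*((E+m+k:ℕ):ℝ))) ((2*(E:ℝ))/((2*E+m:ℕ):ℝ)))
        * ((2:ℝ)^E * Nat.factorial E * Nat.factorial m * ((2:ℝ)^k * Nat.factorial k)
            * Nat.factorial (2*(E+m+k))) := by
  set n2 := E+m+k with hn2def
  set a' := 2*E+m with ha'def
  set b' := m+2*k with hb'def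
  have hab : a' + b' = 2*n2 := by omega
  have he := Real.exp_pos 1
  have hQ : (0:ℝ) < 2*((n2:ℕ):ℝ)+1 := by positivity
  have hthree : (3:ℝ) ≤ 2*((n2:ℕ):ℝ)+1 := by
    have : (1:ℝ) ≤ ((n2:ℕ):ℝ) := by exact_mod_cast hn2
    linarith
  have hexpQ : Real.exp 1 ≤ 2*((n2:ℕ):ℝ)+1 := le_trans exp_one_le_three hthree
  have u1 : (Nat.factorial a' : ℝ) ≤ Real.exp 1 * (2*((n2:ℕ):ℝ)+1) * stirL a' := by
    refine le_trans (fact_upper a') ?_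
    have h1 : ((a':ℕ):ℝ) + 1 ≤ 2*((n2:ℕ):ℝ)+1 := by
      have : (a':ℝ) ≤ 2*(n2:ℝ) := by exact_mod_cast (by omega : a' ≤ 2*n2)
      push_cast at this ⊢
      linarith
    have := stirL_pos a'
    gcongr
  have u2 : (Nat.factorial b' : ℝ) ≤ Real.exp 1 * (2*((n2:ℕ):ℝ)+1) * stirL b' := by
    refine le_trans (fact_upper b') ?_
    have h1 : ((b':ℕ):ℝ) + 1 ≤ 2*((n2:ℕ):ℝ)+1 := by
      have : (b':ℝ) ≤ 2*(n2:ℝ) := by exact_mod_cast (by omega : b' ≤ 2*n2)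
      push_cast at this ⊢
      linarith
    have := stirL_pos b'
    gcongr
  have u3 : (Nat.factorial n2 : ℝ) ≤ Real.exp 1 * (2*((n2:ℕ):ℝ)+1) * stirL n2 := by
    refine le_trans (fact_upper n2) ?_
    have h1 : ((n2:ℕ):ℝ) + 1 ≤ 2*((n2:ℕ):ℝ)+1 := by
      have : (0:ℝ) ≤ (n2:ℝ) := by positivity
      linarith
    have := stirL_pos n2
    gcongr
  have hexp := Real.exp_pos ((2*((n2:ℕ):ℝ)) *
      entF (((a':ℕ):ℝ)/(2*((n2:ℕ):ℝ))) ((2*(E:ℝ))/((a':ℕ):ℝ)))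
  calc (Nat.factorial a' : ℝ) * (Nat.factorial b') * ((2:ℝ)^((n2:ℕ)) * Nat.factorial n2)
      ≤ (Real.exp 1 * (2*((n2:ℕ):ℝ)+1) * stirL a')
        * (Real.exp 1 * (2*((n2:ℕ):ℝ)+1) * stirL b')
        * ((2:ℝ)^((n2:ℕ)) * (Real.exp 1 * (2*((n2:ℕ):ℝ)+1) * stirL n2)) := by
        have h0b : (0:ℝ) ≤ Nat.factorial b' := by positivity
        have h0c : (0:ℝ) ≤ (2:ℝ)^((n2:ℕ)) := by positivity
        have hsa := stirL_pos a'
        have hsb := stirL_pos b'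
        refine mul_le_mul (mul_le_mul u1 u2 h0b (by positivity)) ?_ (by positivity) (by positivity)
        exact mul_le_mul_of_nonneg_left u3 h0c
    _ = (Real.exp 1)^3 * (2*((n2:ℕ):ℝ)+1)^(3:ℕ)
          * ((2:ℝ)^((n2:ℕ)) * (stirL a' * stirL b' * stirL n2)) := by ring
    _ = (Real.exp 1)^3 * (2*((n2:ℕ):ℝ)+1)^(3:ℕ)
          * (Real.exp ((2*((n2:ℕ):ℝ)) *
              entF (((a':ℕ):ℝ)/(2*((n2:ℕ):ℝ))) ((2*(E:ℝ))/((a':ℕ):ℝ)))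
            * ((2:ℝ)^E * 2^k * (stirL E * stirL m * stirL k * stirL (2*n2)))) := by
        rw [stir_ident E m k ha]
    _ ≤ (2*((n2:ℕ):ℝ)+1)^(3:ℕ) * (2*((n2:ℕ):ℝ)+1)^(3:ℕ)
          * (Real.exp ((2*((n2:ℕ):ℝ)) *
              entF (((a':ℕ):ℝ)/(2*((n2:ℕ):ℝ))) ((2*(E:ℝ))/((a':ℕ):ℝ)))
            * ((2:ℝ)^E * Nat.factorial E * Nat.factorial m * ((2:ℝ)^k * Nat.factorial k)
               * Nat.factorial (2*n2))) := by
        have hsE := stirL_pos E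
        have hsm := stirL_pos m
        have hsk := stirL_pos k
        have hs2n := stirL_pos (2*n2)
        have hmono : (Real.exp 1)^3 ≤ (2*((n2:ℕ):ℝ)+1)^(3:ℕ) :=
          pow_le_pow_left₀ he.le hexpQ 3
        have hprod : (2:ℝ)^E * 2^k * (stirL E * stirL m * stirL k * stirL (2*n2))
            ≤ (2:ℝ)^E * Nat.factorial E * Nat.factorial m * ((2:ℝ)^k * Nat.factorial k)
               * Nat.factorial (2*n2) := by
          have l1 := fact_lower E
          have l2 := fact_lower m
          have l3 := fact_lower k
          have l4 := fact_lower (2*n2)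
          calc (2:ℝ)^E * 2^k * (stirL E * stirL m * stirL k * stirL (2*n2))
              ≤ (2:ℝ)^E * 2^k * ((Nat.factorial E : ℝ) * Nat.factorial m
                  * Nat.factorial k * Nat.factorial (2*n2)) := by
                gcongr
            _ = (2:ℝ)^E * Nat.factorial E * Nat.factorial m * ((2:ℝ)^k * Nat.factorial k)
               * Nat.factorial (2*n2) := by ring
        have hmono' : (Real.exp 1)^3 * (2*((n2:ℕ):ℝ)+1)^(3:ℕ)
            ≤ (2*((n2:ℕ):ℝ)+1)^(3:ℕ) * (2*((n2:ℕ):ℝ)+1)^(3:ℕ) :=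
          mul_le_mul_of_nonneg_right hmono (by positivity)
        have hppos : (0:ℝ) ≤ (2:ℝ)^E * 2^k * (stirL E * stirL m * stirL k * stirL (2*n2)) := by
          have h1 : (0:ℝ) < (2:ℝ)^E := by positivity
          have h2 : (0:ℝ) < (2:ℝ)^k := by positivity
          exact (mul_pos (mul_pos h1 h2)
            (mul_pos (mul_pos (mul_pos hsE hsm) hsk) hs2n)).le
        exact mul_le_mul hmono' (mul_le_mul_of_nonneg_left hprod hexp.le)
          (mul_nonneg hexp.le hppos) (by positivity)
    _ = (2*((n2:ℕ):ℝ)+1)^(6:ℝ)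
          * Real.exp ((2*((n2:ℕ):ℝ)) *
              entF (((a':ℕ):ℝ)/(2*((n2:ℕ):ℝ))) ((2*(E:ℝ))/((a':ℕ):ℝ)))
          * ((2:ℝ)^E * Nat.factorial E * Nat.factorial m * ((2:ℝ)^k * Nat.factorial k)
             * Nat.factorial (2*n2)) := by
        have hpow : (2*((n2:ℕ):ℝ)+1)^(3:ℕ) * (2*((n2:ℕ):ℝ)+1)^(3:ℕ)
            = (2*((n2:ℕ):ℝ)+1)^(6:ℝ) := by
          rw [← pow_add]
          rw [show (6:ℝ) = ((6:ℕ):ℝ) by norm_num, Real.rpow_natCast]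
        rw [← hpow]
        ring

theorem stmt_6 :
    ∃ C : ℝ, ∀ N d M : ℕ, 0 < N → 0 < d → 0 < M → M ≤ N → Even (N * d) →
      ∀ U : Finset (Fin N), U.card = M →
      ∀ E : ℕ, 2 * E ≤ M * d → 2 * (M * d) ≤ N * d + 2 * E →
        (Nat.card {P : Set (Sym2 (Fin N × Fin d)) //
            IsPerfectMatching P ∧ pairsIn P ↑U = E} : ℝ) ≤
          ((N * d + 1 : ℝ)) ^ C *
            Real.exp ((N * d : ℝ) *
              entF ((M : ℝ) / N) ((2 * E : ℝ) / (M * d))) *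
            (Nat.card {P : Set (Sym2 (Fin N × Fin d)) // IsPerfectMatching P} : ℝ) := by
  classical
  refine ⟨6, ?_⟩
  intro N d M hN hd hM hMN heven U hU E hE2 hEN
  obtain ⟨n2, hn2⟩ := heven
  have hn2' : N*d = 2*n2 := by omega
  have hapos : 1 ≤ M*d := Nat.mul_pos hM hd
  have haN : M*d ≤ N*d := Nat.mul_le_mul_right d hMN
  have hn2pos : 1 ≤ n2 := by omega
  set α := Fin N × Fin d
  set a := M*d with hadef
  set m := a - 2*E with hmdef
  set k := n2 + E - a with hkdef
  have han2 : a ≤ n2 + E := by omega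
  have hm : 2*E + m = a := by omega
  have hk : E + m + k = n2 := by omega
  have hb : m + 2*k = 2*n2 - a := by omega
  have hcardα : Nat.card α = 2*n2 := by
    rw [Nat.card_eq_fintype_card, Fintype.card_prod, Fintype.card_fin, Fintype.card_fin]
    omega
  set S : Set α := {x : α | x.1 ∈ (↑U : Set (Fin N))} with hSdef
  have hScard : S.ncard = a := by
    have heqv : ↥S ≃ (↥(↑U : Set (Fin N)) × Fin d) :=
      { toFun := fun x => (⟨x.1.1, x.2⟩, x.1.2)
        invFun := fun p => ⟨(p.1.1, p.2), p.1.2⟩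
        left_inv := fun x => rfl
        right_inv := fun p => rfl }
    rw [← Nat.card_coe_set_eq, Nat.card_congr heqv, Nat.card_prod,
      Nat.card_coe_set_eq, Set.ncard_coe_finset, hU, Nat.card_eq_fintype_card,
      Fintype.card_fin]
  have K1 := main_count S E n2 a hcardα hScard hE2 han2
  have K2 := total_lower (α := α) n2 hcardα
  have A := analytic E m k (by omega) (by omega)
  rw [hm, hk, hb] at A
  -- identify LHS subtype
  have hXeq : Nat.card {P : Set (Sym2 α) // IsPerfectMatching P ∧ pairsIn P ↑U = E}
      = Nat.card {P : Set (Sym2 α) //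
          IsPerfectMatching P ∧ {e ∈ P | ∀ x ∈ e, x ∈ S}.ncard = E} := rfl
  set cX := Nat.card {P : Set (Sym2 α) //
      IsPerfectMatching P ∧ {e ∈ P | ∀ x ∈ e, x ∈ S}.ncard = E} with hcX
  set T := Nat.card {P : Set (Sym2 α) // IsPerfectMatching P} with hT
  rw [hXeq]
  -- cast facts
  have hcastNd : (N:ℝ) * (d:ℝ) = 2*((n2:ℕ):ℝ) := by
    have := congrArg (fun z : ℕ => (z:ℝ)) hn2'
    push_cast at this
    linarith
  have hMd : ((a:ℕ):ℝ) = (M:ℝ)*(d:ℝ) := by rw [hadef]; push_cast; ring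
  have hdpos : (0:ℝ) < d := by exact_mod_cast hd
  have harg1 : (M:ℝ)/(N:ℝ) = ((a:ℕ):ℝ)/(2*((n2:ℕ):ℝ)) := by
    rw [hMd, ← hcastNd, mul_div_mul_right _ _ hdpos.ne']
  have harg2 : (2*E : ℝ)/((M:ℝ)*(d:ℝ)) = 2*(E:ℝ)/((a:ℕ):ℝ) := by
    rw [hMd]
  -- rewrite goal constants
  have hgoal_pow : ((N:ℝ)*(d:ℝ) + 1) = 2*((n2:ℕ):ℝ)+1 := by rw [hcastNd]
  push_cast
  rw [hgoal_pow, hcastNd, harg1, harg2]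
  -- now pure inequality chain
  set RR := (2*((n2:ℕ):ℝ)+1)^(6:ℝ)
    * Real.exp (2*((n2:ℕ):ℝ) * entF (((a:ℕ):ℝ)/(2*((n2:ℕ):ℝ))) (2*(E:ℝ)/((a:ℕ):ℝ))) with hRR
  have hRRpos : 0 < RR := by
    rw [hRR]
    have : (0:ℝ) < 2*((n2:ℕ):ℝ)+1 := by positivity
    positivity
  set D : ℕ := 2^E * Nat.factorial E * Nat.factorial m * (2^k * Nat.factorial k) with hD
  set Q : ℕ := 2^n2 * Nat.factorial n2 with hQ
  have hDpos : 0 < (D:ℝ) := by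
    rw [hD]; push_cast; positivity
  have hQpos : 0 < (Q:ℝ) := by
    rw [hQ]; push_cast; positivity
  have K1c : (cX : ℝ) * D ≤ (Nat.factorial a : ℝ) * Nat.factorial (2*n2 - a) := by
    have := (Nat.cast_le (α := ℝ)).mpr K1
    push_cast at this ⊢
    convert this using 2 <;> push_cast <;> ring
  have K2c : ((Nat.factorial (2*n2) : ℕ) : ℝ) ≤ (T:ℝ) * Q := by
    have := (Nat.cast_le (α := ℝ)).mpr K2
    push_cast at this ⊢
    convert this using 1 <;> push_cast <;> ring
  have Ac : (Nat.factorial a : ℝ) * Nat.factorial (2*n2 - a) * Q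
      ≤ RR * ((D:ℝ) * Nat.factorial (2*(n2))) := by
    have := A
    rw [hRR, hD, hQ]
    push_cast at this ⊢
    calc (Nat.factorial a : ℝ) * Nat.factorial (2*n2 - a)
          * ((2:ℝ)^n2 * Nat.factorial n2) ≤ _ := this
      _ = _ := by ring
  have final : (cX:ℝ) * ((D:ℝ)*(Q:ℝ)) ≤ (RR * T) * ((D:ℝ)*(Q:ℝ)) := by
    calc (cX:ℝ) * ((D:ℝ)*(Q:ℝ)) = ((cX:ℝ)*(D:ℝ))*(Q:ℝ) := by ring
      _ ≤ ((Nat.factorial a : ℝ) * Nat.factorial (2*n2 - a)) * (Q:ℝ) := by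
          apply mul_le_mul_of_nonneg_right K1c hQpos.le
      _ ≤ RR * ((D:ℝ) * Nat.factorial (2*(n2))) := Ac
      _ ≤ RR * ((D:ℝ) * ((T:ℝ) * Q)) := by
          apply mul_le_mul_of_nonneg_left _ hRRpos.le
          apply mul_le_mul_of_nonneg_left K2c hDpos.le
      _ = (RR * T) * ((D:ℝ)*(Q:ℝ)) := by ring
  have := le_of_mul_le_mul_right final (by positivity : (0:ℝ) < (D:ℝ)*(Q:ℝ))
  calc (cX:ℝ) ≤ RR * T := this
    _ = (2*((n2:ℕ):ℝ)+1)^(6:ℝ)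
        * Real.exp (2*((n2:ℕ):ℝ) * entF (((a:ℕ):ℝ)/(2*((n2:ℕ):ℝ))) (2*(E:ℝ)/((a:ℕ):ℝ)))
        * T := by rw [hRR]
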